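/- Let M > 0 and c > 0. The set of concave functions r : [−c, c] → ℝ with r(0) = 0, r ≤ M, and r(±c) ≥ k (for fixed k < 0) is compact under pointwise convergence, and any functional of the form r ↦ (1/2)∫_{−c}^c r² du − ∫_{−c}^c r g du with g bounded and measurable attains its minimum on this set. -/

import Mathlib

open MeasureTheory Set Filter Topology

private lemma aux_lb {c k : ℝ} (hc : 0 < c) {r : ℝ → ℝ}
    (hconc : ConcaveOn ℝ (Set.Icc (-c) c) r) (h1 : k ≤ r (-c)) (h2 : k ≤ r c)
    {u : ℝ} (hu : u ∈ Set.Icc (-c) c) : k ≤ r u := by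
  have hle : (-c) ≤ c := by linarith
  have h3 : min (r (-c)) (r c) ≤ r u :=
    hconc.ge_on_segment (Set.left_mem_Icc.mpr hle) (Set.right_mem_Icc.mpr hle)
      (by rw [segment_eq_Icc hle]; exact hu)
  calc k = min k k := (min_self k).symm
    _ ≤ min (r (-c)) (r c) := min_le_min h1 h2
    _ ≤ r u := h3

private lemma aux_meas {c : ℝ} (hc : 0 < c) {r : ℝ → ℝ}
    (hconc : ConcaveOn ℝ (Set.Icc (-c) c) r) :
    AEStronglyMeasurable r (volume.restrict (Set.uIoc (-c) c)) := by
  have h1 : Set.uIoc (-c) c = Set.Ioc (-c) c := Set.uIoc_of_le (by linarith)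
  rw [h1, ← Measure.restrict_congr_set Ioo_ae_eq_Ioc]
  have hcont : ContinuousOn r (Set.Ioo (-c) c) := by
    have := hconc.continuousOn_interior
    rwa [interior_Icc] at this
  exact hcont.aestronglyMeasurable measurableSet_Ioo

private lemma aux_closed_concave (c : ℝ) :
    IsClosed {r : ℝ → ℝ | ConcaveOn ℝ (Set.Icc (-c) c) r} := by
  have heq : {r : ℝ → ℝ | ConcaveOn ℝ (Set.Icc (-c) c) r} =
      ⋂ (x ∈ Set.Icc (-c) c) (y ∈ Set.Icc (-c) c) (a : ℝ) (b : ℝ),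
        {r : ℝ → ℝ | 0 ≤ a → 0 ≤ b → a + b = 1 →
          a * r x + b * r y ≤ r (a * x + b * y)} := by
    ext r
    simp only [Set.mem_setOf_eq, Set.mem_iInter]
    constructor
    · intro h x hx y hy a b ha hb hab
      simpa [smul_eq_mul] using h.2 hx hy ha hb hab
    · intro h
      refine ⟨convex_Icc _ _, fun x hx y hy a b ha hb hab => ?_⟩
      simpa [smul_eq_mul] using h x hx y hy a b ha hb hab
  rw [heq]
  refine isClosed_biInter fun x hx => isClosed_biInter fun y hy =>
    isClosed_iInter fun a => isClosed_iInter fun b => ?_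
  rcases em (0 ≤ a ∧ 0 ≤ b ∧ a + b = 1) with ⟨ha, hb, hab⟩ | h
  · have hset : {r : ℝ → ℝ | 0 ≤ a → 0 ≤ b → a + b = 1 →
        a * r x + b * r y ≤ r (a * x + b * y)} =
        {r : ℝ → ℝ | a * r x + b * r y ≤ r (a * x + b * y)} := by
      ext r; simp [ha, hb, hab]
    rw [hset]
    exact isClosed_le ((continuous_const.mul (continuous_apply x)).add
      (continuous_const.mul (continuous_apply y))) (continuous_apply _)
  · have hset : {r : ℝ → ℝ | 0 ≤ a → 0 ≤ b → a + b = 1 →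
        a * r x + b * r y ≤ r (a * x + b * y)} = Set.univ := by
      ext r
      simp only [Set.mem_setOf_eq, Set.mem_univ, iff_true]
      intro ha hb hab
      exact absurd ⟨ha, hb, hab⟩ h
    rw [hset]
    exact isClosed_univ

theorem stmt_10 (c M k : ℝ) (hc : 0 < c) (hM : 0 < M) (hk : k < 0) :
    letI S : Set (ℝ → ℝ) :=
      {r | ConcaveOn ℝ (Set.Icc (-c) c) r ∧ r 0 = 0 ∧
        (∀ u ∈ Set.Icc (-c) c, r u ≤ M) ∧ k ≤ r (-c) ∧ k ≤ r c ∧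
        (∀ u ∉ Set.Icc (-c) c, r u = 0)}
    IsCompact S ∧
      ∀ g : ℝ → ℝ, Measurable g → (∃ B : ℝ, ∀ u, |g u| ≤ B) →
        ∃ r₀ ∈ S, ∀ r ∈ S,
          (1 / 2) * (∫ u in (-c)..c, (r₀ u) ^ 2) - (∫ u in (-c)..c, r₀ u * g u)
            ≤ (1 / 2) * (∫ u in (-c)..c, (r u) ^ 2) - (∫ u in (-c)..c, r u * g u) := by
  set S : Set (ℝ → ℝ) :=
    {r | ConcaveOn ℝ (Set.Icc (-c) c) r ∧ r 0 = 0 ∧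
      (∀ u ∈ Set.Icc (-c) c, r u ≤ M) ∧ k ≤ r (-c) ∧ k ≤ r c ∧
      (∀ u ∉ Set.Icc (-c) c, r u = 0)} with hSdef
  have hle : (-c) ≤ c := by linarith
  -- S is closed
  have hSclosed : IsClosed S := by
    have h1 := aux_closed_concave c
    have h2 : IsClosed {r : ℝ → ℝ | r 0 = 0} :=
      isClosed_eq (continuous_apply 0) continuous_const
    have h3 : IsClosed {r : ℝ → ℝ | ∀ u ∈ Set.Icc (-c) c, r u ≤ M} := by
      have : {r : ℝ → ℝ | ∀ u ∈ Set.Icc (-c) c, r u ≤ M} =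
          ⋂ u ∈ Set.Icc (-c) c, {r : ℝ → ℝ | r u ≤ M} := by
        ext r; simp
      rw [this]
      exact isClosed_biInter fun u hu => isClosed_le (continuous_apply u) continuous_const
    have h4 : IsClosed {r : ℝ → ℝ | k ≤ r (-c)} :=
      isClosed_le continuous_const (continuous_apply _)
    have h5 : IsClosed {r : ℝ → ℝ | k ≤ r c} :=
      isClosed_le continuous_const (continuous_apply _)
    have h6 : IsClosed {r : ℝ → ℝ | ∀ u ∉ Set.Icc (-c) c, r u = 0} := by
      have : {r : ℝ → ℝ | ∀ u ∉ Set.Icc (-c) c, r u = 0} =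
          ⋂ u ∈ (Set.Icc (-c) c)ᶜ, {r : ℝ → ℝ | r u = 0} := by
        ext r; simp
      rw [this]
      exact isClosed_biInter fun u hu =>
        isClosed_eq (continuous_apply u) continuous_const
    have hSeq : S = {r : ℝ → ℝ | ConcaveOn ℝ (Set.Icc (-c) c) r} ∩
        ({r : ℝ → ℝ | r 0 = 0} ∩ ({r : ℝ → ℝ | ∀ u ∈ Set.Icc (-c) c, r u ≤ M} ∩
        ({r : ℝ → ℝ | k ≤ r (-c)} ∩ ({r : ℝ → ℝ | k ≤ r c} ∩
        {r : ℝ → ℝ | ∀ u ∉ Set.Icc (-c) c, r u = 0})))) := rfl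
    rw [hSeq]
    exact h1.inter (h2.inter (h3.inter (h4.inter (h5.inter h6))))
  -- S is compact
  have hSsub : S ⊆ Set.pi Set.univ (fun _ : ℝ => Set.Icc k M) := by
    intro r hr
    obtain ⟨hconc, hr0, hub, hkm, hkp, hout⟩ := hr
    intro u _
    by_cases hu : u ∈ Set.Icc (-c) c
    · exact ⟨aux_lb hc hconc hkm hkp hu, hub u hu⟩
    · rw [hout u hu]
      exact ⟨hk.le, hM.le⟩
  have hScpt : IsCompact S :=
    (isCompact_univ_pi fun _ => isCompact_Icc).of_isClosed_subset hSclosed hSsub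
  refine ⟨hScpt, ?_⟩
  -- the zero function is in S
  have h0S : (fun _ : ℝ => (0 : ℝ)) ∈ S :=
    ⟨concaveOn_const 0 (convex_Icc _ _), rfl, fun u _ => hM.le, hk.le, hk.le, fun u _ => rfl⟩
  intro g hg ⟨B, hB⟩
  -- injectivity of restriction to rationals + endpoints
  set Φ : (ℝ → ℝ) → (ℚ → ℝ) × ℝ × ℝ :=
    fun r => (fun q => r (q : ℝ), r (-c), r c) with hΦ
  have hΦcont : Continuous Φ := by
    refine Continuous.prodMk (continuous_pi fun q => continuous_apply _) ?_
    exact (continuous_apply _).prodMk (continuous_apply _)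
  have hΦinj : ∀ r ∈ S, ∀ r' ∈ S, Φ r = Φ r' → r = r' := by
    intro r hr r' hr' heq
    have hq : ∀ q : ℚ, r (q : ℝ) = r' (q : ℝ) := fun q =>
      congrFun (congrArg Prod.fst heq) q
    have hm : r (-c) = r' (-c) := congrArg (Prod.fst ∘ Prod.snd) heq
    have hp : r c = r' c := congrArg (Prod.snd ∘ Prod.snd) heq
    funext u
    by_cases hu : u ∈ Set.Icc (-c) c
    · rcases eq_or_lt_of_le hu.1 with h1 | h1
      · rw [← h1]; exact hm
      rcases eq_or_lt_of_le hu.2 with h2 | h2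
      · rw [h2]; exact hp
      have huIoo : u ∈ Set.Ioo (-c) c := ⟨h1, h2⟩
      have hcr : ContinuousAt r u := by
        have := hr.1.continuousOn_interior
        rw [interior_Icc] at this
        exact this.continuousAt (isOpen_Ioo.mem_nhds huIoo)
      have hcr' : ContinuousAt r' u := by
        have := hr'.1.continuousOn_interior
        rw [interior_Icc] at this
        exact this.continuousAt (isOpen_Ioo.mem_nhds huIoo)
      have hdense : u ∈ closure (Set.range ((↑) : ℚ → ℝ)) := Rat.denseRange_cast u
      rw [mem_closure_iff_seq_limit] at hdense
      obtain ⟨x, hxmem, hxlim⟩ := hdense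
      have hrx : Tendsto (fun n => r (x n)) atTop (𝓝 (r u)) := hcr.tendsto.comp hxlim
      have hrx' : Tendsto (fun n => r (x n)) atTop (𝓝 (r' u)) := by
        have : (fun n => r (x n)) = fun n => r' (x n) := by
          funext n
          obtain ⟨q, hqn⟩ := hxmem n
          rw [← hqn]; exact hq q
        rw [this]
        exact hcr'.tendsto.comp hxlim
      exact tendsto_nhds_unique hrx hrx'
    · rw [hr.2.2.2.2.2 u hu, hr'.2.2.2.2.2 u hu]
  -- metrizability of S
  haveI : CompactSpace ↥S := isCompact_iff_compactSpace.mp hScpt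
  have he_cont : Continuous (fun x : ↥S => Φ x.1) := hΦcont.comp continuous_subtype_val
  have he_inj : Function.Injective (fun x : ↥S => Φ x.1) := fun x y hxy =>
    Subtype.ext (hΦinj _ x.2 _ y.2 hxy)
  haveI : TopologicalSpace.MetrizableSpace ↥S :=
    (he_cont.isClosedEmbedding he_inj).toIsEmbedding.metrizableSpace
  letI : MetricSpace ↥S := TopologicalSpace.metrizableSpaceMetric ↥S
  -- bound on S
  set C : ℝ := max M (-k) with hC
  have habs : ∀ r ∈ S, ∀ u ∈ Set.uIoc (-c) c, |r u| ≤ C := by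
    intro r hr u hu
    rw [Set.uIoc_of_le hle] at hu
    have hu' : u ∈ Set.Icc (-c) c := Set.Ioc_subset_Icc_self hu
    rw [abs_le]
    constructor
    · have : k ≤ r u := aux_lb hc hr.1 hr.2.2.2.1 hr.2.2.2.2.1 hu'
      have : -C ≤ k := by
        have : -k ≤ C := le_max_right _ _
        linarith
      linarith [aux_lb hc hr.1 hr.2.2.2.1 hr.2.2.2.2.1 hu']
    · exact (hr.2.2.1 u hu').trans (le_max_left _ _)
  -- continuity of the functional on S
  set F : (ℝ → ℝ) → ℝ := fun r =>
    (1 / 2) * (∫ u in (-c)..c, (r u) ^ 2) - (∫ u in (-c)..c, r u * g u) with hF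
  have hFcont : ContinuousOn F S := by
    rw [continuousOn_iff_continuous_restrict]
    apply SeqContinuous.continuous
    intro x p hxp
    have hpt : ∀ u, Tendsto (fun n => (x n : ℝ → ℝ) u) atTop (𝓝 ((p : ℝ → ℝ) u)) :=
      fun u => (((continuous_apply u).comp continuous_subtype_val).tendsto p).comp hxp
    have hmeas : ∀ n : ℕ, AEStronglyMeasurable (x n : ℝ → ℝ)
        (volume.restrict (Set.uIoc (-c) c)) := fun n => aux_meas hc (x n).2.1
    have I1 : Tendsto (fun n => ∫ u in (-c)..c, ((x n : ℝ → ℝ) u) ^ 2) atTop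
        (𝓝 (∫ u in (-c)..c, ((p : ℝ → ℝ) u) ^ 2)) := by
      apply intervalIntegral.tendsto_integral_filter_of_dominated_convergence
        (bound := fun _ => C ^ 2)
      · refine Eventually.of_forall fun n => ?_
        have := (hmeas n).mul (hmeas n)
        simpa [pow_two, Pi.mul_def] using this
      · refine Eventually.of_forall fun n => ae_of_all _ fun u hu => ?_
        have h := habs _ (x n).2 u hu
        calc ‖((x n : ℝ → ℝ) u) ^ 2‖ = |(x n : ℝ → ℝ) u| ^ 2 := by
              rw [Real.norm_eq_abs, abs_pow]
          _ ≤ C ^ 2 := by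
              apply pow_le_pow_left₀ (abs_nonneg _) h
      · exact intervalIntegrable_const
      · exact ae_of_all _ fun u _ => (hpt u).pow 2
    have I2 : Tendsto (fun n => ∫ u in (-c)..c, (x n : ℝ → ℝ) u * g u) atTop
        (𝓝 (∫ u in (-c)..c, (p : ℝ → ℝ) u * g u)) := by
      apply intervalIntegral.tendsto_integral_filter_of_dominated_convergence
        (bound := fun u => C * |g u|)
      · exact Eventually.of_forall fun n =>
          (hmeas n).mul hg.aestronglyMeasurable
      · refine Eventually.of_forall fun n => ae_of_all _ fun u hu => ?_
        have h := habs _ (x n).2 u hu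
        calc ‖(x n : ℝ → ℝ) u * g u‖ = |(x n : ℝ → ℝ) u| * |g u| := by
              rw [Real.norm_eq_abs, abs_mul]
          _ ≤ C * |g u| := by
              apply mul_le_mul_of_nonneg_right h (abs_nonneg _)
      · -- integrable bound
        have : IntervalIntegrable (fun u => C * |g u|) volume (-c) c := by
          apply IntervalIntegrable.mono_fun' (g := fun _ => C * B)
          · exact intervalIntegrable_const
          · exact (hg.aestronglyMeasurable.norm.const_mul C).restrict
          · refine ae_of_all _ fun u => ?_
            simp only [Real.norm_eq_abs, abs_mul]
            have hC0 : 0 ≤ C := le_trans hM.le (le_max_left _ _)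
            rw [abs_of_nonneg hC0, abs_abs]
            exact mul_le_mul_of_nonneg_left (hB u) hC0
        exact this
      · exact ae_of_all _ fun u _ => (hpt u).mul_const (g u)
    have : Tendsto (fun n => F (x n : ℝ → ℝ)) atTop (𝓝 (F (p : ℝ → ℝ))) :=
      ((I1.const_mul (1 / 2)).sub I2)
    exact this
  obtain ⟨r₀, hr₀S, hmin⟩ := hScpt.exists_isMinOn ⟨_, h0S⟩ hFcont
  exact ⟨r₀, hr₀S, fun r hr => hmin hr⟩
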